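/- For every n, the detection error probability satisfies P_e^{(n)} ≤ E[ exp( −C_p (√n (X̄_n − S))² ) ], where C_p = (1−2p)²/2. -/

import Mathlib

open MeasureTheory Filter Real

/-- In the sentiment detection model (sentiments `X n` valued in `{-1,1}^n`,
measurements `Y n` conditionally independent given `X n` with crossover probability `p`),
for every `n` the detection error probability satisfies
`P_e^{(n)} ≤ E[exp(-C_p (√n (X̄_n - S))²)]` with `C_p = (1-2p)²/2`. -/
lemma hoeff_log (p : ℝ) (hp0 : 0 < p) (hp1 : p < 1) (s : ℝ) :
    Real.log ((1-p) * Real.exp (2*s) + p) ≤ s^2/2 + 2*(1-p)*s := by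
  set q : ℝ := 1 - p with hq
  have hq0 : 0 < q := by simp [hq]; linarith
  have h_pos : ∀ t : ℝ, 0 < q * Real.exp (2*t) + p := fun t =>
    by positivity
  set h : ℝ → ℝ := fun t => q * Real.exp (2*t) + p with hh
  have hd : ∀ t : ℝ, HasDerivAt h (2 * q * Real.exp (2*t)) t := by
    intro t
    have h2t : HasDerivAt (fun t : ℝ => 2*t) 2 t := by
      simpa using (hasDerivAt_id t).const_mul 2
    have := (h2t.exp.const_mul q).add_const p
    exact this.congr_deriv (by ring)
  set G : ℝ → ℝ := fun t => t + 2*q - 2*q*Real.exp (2*t) / h t with hG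
  have hFd : ∀ t : ℝ, HasDerivAt (fun t => t^2/2 + 2*q*t - Real.log (h t)) (G t) t := by
    intro t
    have h1 : HasDerivAt (fun t : ℝ => t^2/2 + 2*q*t) (t + 2*q) t := by
      have := ((hasDerivAt_pow 2 t).div_const 2).add ((hasDerivAt_id t).const_mul (2*q))
      exact this.congr_deriv (by norm_num)
    have h2 : HasDerivAt (fun t => Real.log (h t)) ((2*q*Real.exp (2*t)) / h t) t :=
      (hd t).log (h_pos t).ne'
    exact h1.sub h2
  have hGd : ∀ t : ℝ, HasDerivAt G (1 - (4*q*Real.exp (2*t)*(h t) - (2*q*Real.exp (2*t))*(2*q*Real.exp (2*t))) / (h t)^2) t := by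
    intro t
    have hu : HasDerivAt (fun t : ℝ => 2*q*Real.exp (2*t)) (4*q*Real.exp (2*t)) t := by
      have h2t : HasDerivAt (fun t : ℝ => 2*t) 2 t := by
        simpa using (hasDerivAt_id t).const_mul 2
      have := h2t.exp.const_mul (2*q)
      exact this.congr_deriv (by ring)
    have := ((hasDerivAt_id t).add_const (2*q)).sub (hu.div (hd t) (h_pos t).ne')
    exact this
  have hGmono : Monotone G := by
    apply monotone_of_hasDerivAt_nonneg hGd
    intro t
    have he : (0:ℝ) < Real.exp (2*t) := Real.exp_pos _
    have key : 4*q*Real.exp (2*t)*(h t) - (2*q*Real.exp (2*t))*(2*q*Real.exp (2*t)) ≤ (h t)^2 := by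
      have sq : 0 ≤ (q * Real.exp (2*t) - p)^2 := sq_nonneg _
      simp only [hh]; nlinarith [sq]
    have hpos2 : (0:ℝ) < (h t)^2 := pow_pos (h_pos t) 2
    have := div_le_one_of_le₀ key hpos2.le
    simp only [Pi.zero_apply]
    linarith [this]
  have hG0 : G 0 = 0 := by
    have hqp : q + p = 1 := by simp [hq]
    simp only [hG, hh, mul_zero, Real.exp_zero, mul_one, hqp]
    norm_num
  -- F(s) ≥ F(0) = 0
  set F : ℝ → ℝ := fun t => t^2/2 + 2*q*t - Real.log (h t) with hF
  have hF0 : F 0 = 0 := by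
    have hqp : q + p = 1 := by simp [hq]
    simp only [hF, hh, mul_zero, Real.exp_zero, mul_one, hqp]
    norm_num
  have hFs : 0 ≤ F s := by
    rcases le_total 0 s with hs | hs
    · have mono : MonotoneOn F (Set.Ici 0) := by
        apply monotoneOn_of_hasDerivWithinAt_nonneg (convex_Ici 0)
          (fun t _ => ((hFd t).continuousAt.continuousWithinAt))
          (fun t _ => (hFd t).hasDerivWithinAt)
        intro t ht
        rw [interior_Ici] at ht
        have := hGmono (le_of_lt ht)
        rw [hG0] at this; exact this
      have := mono (Set.self_mem_Ici) (Set.mem_Ici.mpr hs) hs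
      rwa [hF0] at this
    · have anti : AntitoneOn F (Set.Iic 0) := by
        apply antitoneOn_of_hasDerivWithinAt_nonpos (convex_Iic 0)
          (fun t _ => ((hFd t).continuousAt.continuousWithinAt))
          (fun t _ => (hFd t).hasDerivWithinAt)
        intro t ht
        rw [interior_Iic] at ht
        have := hGmono (le_of_lt ht)
        rw [hG0] at this; exact this
      have := anti (Set.mem_Iic.mpr hs) (Set.self_mem_Iic) hs
      rwa [hF0] at this
  have : Real.log (h s) ≤ s^2/2 + 2*q*s := by simp only [hF] at hFs; linarith
  simpa [hh, hq] using this

lemma hoeff_mgf (p : ℝ) (hp0 : 0 < p) (hp1 : p < 1) (s : ℝ) :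
    (1-p) * Real.exp (2*p*s) + p * Real.exp (-(2*(1-p)*s)) ≤ Real.exp (s^2/2) := by
  have hq0 : (0:ℝ) < 1 - p := by linarith
  have hpos : (0:ℝ) < (1-p) * Real.exp (2*s) + p := by positivity
  have h1 := hoeff_log p hp0 hp1 s
  have h2 : (1-p) * Real.exp (2*s) + p ≤ Real.exp (s^2/2 + 2*(1-p)*s) := by
    calc (1-p) * Real.exp (2*s) + p = Real.exp (Real.log ((1-p) * Real.exp (2*s) + p)) :=
          (Real.exp_log hpos).symm
      _ ≤ _ := Real.exp_le_exp.mpr h1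
  have := mul_le_mul_of_nonneg_left h2 (Real.exp_pos (-(2*(1-p)*s))).le
  calc (1-p) * Real.exp (2*p*s) + p * Real.exp (-(2*(1-p)*s))
      = Real.exp (-(2*(1-p)*s)) * ((1-p) * Real.exp (2*s) + p) := by
        have e : Real.exp (-(2*(1-p)*s)) * Real.exp (2*s) = Real.exp (2*p*s) := by
          rw [← Real.exp_add]; congr 1; ring
        rw [mul_add, ← mul_assoc, mul_comm (Real.exp (-(2*(1-p)*s))) (1-p)]
        conv_rhs => rw [mul_assoc, e, mul_comm (Real.exp (-(2*(1-p)*s))) p]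

    _ ≤ Real.exp (-(2*(1-p)*s)) * Real.exp (s^2/2 + 2*(1-p)*s) := this
    _ = Real.exp (s^2/2) := by rw [← Real.exp_add]; ring_nf

lemma key_sum (p S : ℝ) (hp0 : 0 < p) (hp1 : p < 1/2) (n : ℕ) (x : Fin n → ℝ)
    (hx : ∀ i, x i = 1 ∨ x i = -1) :
    ∑ y ∈ Fintype.piFinset (fun _ : Fin n => ({1, -1} : Finset ℝ)),
      (if ((∑ i, x i)/(n:ℝ) - S) * ((∑ i, y i)/(n:ℝ) - (1 - 2*p)*S) < 0
       then ∏ i, (if y i = x i then 1 - p else p) else 0)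
    ≤ Real.exp (-((1 - 2*p)^2/2) * (Real.sqrt n * ((∑ i, x i)/(n:ℝ) - S))^2) := by
  classical
  have hp1' : p < 1 := by linarith
  set L : ℝ := 1 - 2*p with hL
  have hL0 : 0 < L := by simp [hL]; linarith
  set a : ℝ := (∑ i, x i)/(n:ℝ) - S with ha
  set s : ℝ := -(L*a) with hs
  -- termwise bound
  have hterm : ∀ y ∈ Fintype.piFinset (fun _ : Fin n => ({1, -1} : Finset ℝ)),
      (if ((∑ i, x i)/(n:ℝ) - S) * ((∑ i, y i)/(n:ℝ) - L*S) < 0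
       then ∏ i, (if y i = x i then 1 - p else p) else 0)
      ≤ Real.exp (-(L^2*n*a^2)) * ∏ i, ((if y i = x i then 1 - p else p) * Real.exp (s*(y i - L*x i))) := by
    intro y hy
    have hw : ∀ i, (0:ℝ) ≤ (if y i = x i then 1 - p else p) := by
      intro i; split <;> linarith
    have hprod : ∏ i, ((if y i = x i then 1 - p else p) * Real.exp (s*(y i - L*x i)))
        = (∏ i, (if y i = x i then 1 - p else p)) * Real.exp (s * ∑ i, (y i - L*x i)) := by
      rw [Finset.prod_mul_distrib, ← Real.exp_sum, Finset.mul_sum]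
    rw [hprod]
    have hwprod : (0:ℝ) ≤ ∏ i, (if y i = x i then 1 - p else p) :=
      Finset.prod_nonneg (fun i _ => hw i)
    split
    case isTrue hφ =>
      set D : ℝ := ∑ i, (y i - L*x i) with hD
      have hDe : D = (∑ i, y i) - L * (∑ i, x i) := by
        rw [hD, Finset.sum_sub_distrib, Finset.mul_sum]
      have hexp : (0:ℝ) ≤ -(L^2*n*a^2) + s*D := by
        rcases Nat.eq_zero_or_pos n with hn | hn
        · exfalso
          subst hn
          simp only [Finset.univ_eq_empty, Finset.sum_empty, Nat.cast_zero, div_zero,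
            zero_sub] at hφ
          nlinarith [sq_nonneg S]
        · have hn0 : (0:ℝ) < (n:ℝ) := by exact_mod_cast hn
          have hAD : a * D = (n:ℝ) * (a * ((∑ i, y i)/(n:ℝ) - L*S)) - L*(n:ℝ)*a^2 := by
            rw [hDe, ha]
            field_simp
            ring
          have hφ' : a * ((∑ i, y i)/(n:ℝ) - L*S) < 0 := hφ
          set T : ℝ := a * ((∑ i, y i)/(n:ℝ) - L*S) with hT
          have h4 : L * ((n:ℝ) * T) < 0 := by
            rw [← mul_assoc]
            exact mul_neg_of_pos_of_neg (mul_pos hL0 hn0) hφ'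
          have h5 : -(L*a)*D = -(L*((n:ℝ) * T)) + L^2*(n:ℝ)*a^2 := by
            rw [show -(L*a)*D = -(L*(a*D)) by ring, hAD, hT]; ring
          rw [hs]
          linarith
      have h1 : (1:ℝ) ≤ Real.exp (-(L^2*n*a^2)) * Real.exp (s*D) := by
        rw [← Real.exp_add, ← Real.exp_zero]
        exact Real.exp_le_exp.mpr hexp
      calc (∏ i, (if y i = x i then 1 - p else p))
          = (∏ i, (if y i = x i then 1 - p else p)) * 1 := (mul_one _).symm
        _ ≤ (∏ i, (if y i = x i then 1 - p else p)) * (Real.exp (-(L^2*n*a^2)) * Real.exp (s*D)) :=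
            mul_le_mul_of_nonneg_left h1 hwprod
        _ = Real.exp (-(L^2*n*a^2)) * ((∏ i, (if y i = x i then 1 - p else p)) * Real.exp (s*D)) := by
            ring
    case isFalse =>
      exact mul_nonneg (Real.exp_pos _).le (mul_nonneg hwprod (Real.exp_pos _).le)
  calc ∑ y ∈ Fintype.piFinset (fun _ : Fin n => ({1, -1} : Finset ℝ)),
      (if ((∑ i, x i)/(n:ℝ) - S) * ((∑ i, y i)/(n:ℝ) - L*S) < 0
       then ∏ i, (if y i = x i then 1 - p else p) else 0)
      ≤ ∑ y ∈ Fintype.piFinset (fun _ : Fin n => ({1, -1} : Finset ℝ)),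
        Real.exp (-(L^2*n*a^2)) * ∏ i, ((if y i = x i then 1 - p else p) * Real.exp (s*(y i - L*x i))) :=
        Finset.sum_le_sum hterm
    _ = Real.exp (-(L^2*n*a^2)) * ∑ y ∈ Fintype.piFinset (fun _ : Fin n => ({1, -1} : Finset ℝ)),
        ∏ i, ((if y i = x i then 1 - p else p) * Real.exp (s*(y i - L*x i))) := by
        rw [Finset.mul_sum]
    _ = Real.exp (-(L^2*n*a^2)) * ∏ i : Fin n, ∑ v ∈ ({1, -1} : Finset ℝ),
        ((if v = x i then 1 - p else p) * Real.exp (s*(v - L*x i))) := by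
        rw [Finset.prod_univ_sum]
    _ ≤ Real.exp (-(L^2*n*a^2)) * ∏ i : Fin n, Real.exp (s^2/2) := by
        apply mul_le_mul_of_nonneg_left _ (Real.exp_pos _).le
        apply Finset.prod_le_prod
        · intro i _
          apply Finset.sum_nonneg
          intro v _
          have : (0:ℝ) ≤ (if v = x i then 1 - p else p) := by split <;> linarith
          positivity
        · intro i _
          have hsum : ∑ v ∈ ({1, -1} : Finset ℝ),
              ((if v = x i then 1 - p else p) * Real.exp (s*(v - L*x i)))
              = (if (1:ℝ) = x i then 1 - p else p) * Real.exp (s*(1 - L*x i))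
                + (if (-1:ℝ) = x i then 1 - p else p) * Real.exp (s*(-1 - L*x i)) := by
            rw [Finset.sum_insert (by norm_num), Finset.sum_singleton]
          rw [hsum]
          rcases hx i with hxi | hxi
          · rw [hxi]
            simp only [if_pos rfl, if_neg (by norm_num : (-1:ℝ) ≠ 1)]
            have e1 : s*(1 - L*1) = 2*p*s := by rw [hL]; ring
            have e2 : s*(-1 - L*1) = -(2*(1-p)*s) := by rw [hL]; ring
            rw [e1, e2]
            exact hoeff_mgf p hp0 hp1' s
          · rw [hxi]
            simp only [if_neg (by norm_num : (1:ℝ) ≠ -1), if_pos rfl]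
            have e1 : s*(1 - L*(-1)) = -(2*(1-p)*(-s)) := by rw [hL]; ring
            have e2 : s*(-1 - L*(-1)) = 2*p*(-s) := by rw [hL]; ring
            rw [e1, e2]
            have := hoeff_mgf p hp0 hp1' (-s)
            calc p * Real.exp (-(2*(1-p)*(-s))) + (1-p) * Real.exp (2*p*(-s))
                = (1-p) * Real.exp (2*p*(-s)) + p * Real.exp (-(2*(1-p)*(-s))) := by ring
              _ ≤ Real.exp ((-s)^2/2) := this
              _ = Real.exp (s^2/2) := by rw [neg_pow]; ring_nf
    _ = Real.exp (-((1 - 2*p)^2/2) * (Real.sqrt n * a)^2) := by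
        rw [Finset.prod_const, Finset.card_univ, Fintype.card_fin, ← Real.exp_nat_mul,
          ← Real.exp_add]
        congr 1
        have hsq : Real.sqrt n ^ 2 = (n:ℝ) := Real.sq_sqrt (Nat.cast_nonneg n)
        rw [hs, ← hL]
        rw [mul_pow, hsq]
        ring

theorem supermajority_error_hoeffding_bound
    {Ω : Type*} [MeasurableSpace Ω] (P : Measure Ω) [IsProbabilityMeasure P]
    (p S : ℝ) (hp0 : 0 < p) (hp1 : p < 1 / 2) (hS0 : -1 < S) (hS1 : S < 1)
    (X Y : (n : ℕ) → Ω → Fin n → ℝ)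
    (hXval : ∀ n ω i, X n ω i = 1 ∨ X n ω i = -1)
    (hYval : ∀ n ω i, Y n ω i = 1 ∨ Y n ω i = -1)
    (hXmeas : ∀ n, Measurable (X n))
    (hYmeas : ∀ n, Measurable (Y n))
    (hjoint : ∀ n (x y : Fin n → ℝ), (∀ i, x i = 1 ∨ x i = -1) →
      (∀ i, y i = 1 ∨ y i = -1) →
      (P {ω | X n ω = x ∧ Y n ω = y}).toReal
        = (P {ω | X n ω = x}).toReal * ∏ i, (if y i = x i then 1 - p else p))
    (n : ℕ) :
    (P {ω | ((∑ i, X n ω i) / n - S) * ((∑ i, Y n ω i) / n - (1 - 2 * p) * S) < 0}).toReal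
      ≤ ∫ ω, Real.exp (-((1 - 2 * p) ^ 2 / 2) *
          (Real.sqrt n * ((∑ i, X n ω i) / n - S)) ^ 2) ∂P := by
  classical
  set V : Finset (Fin n → ℝ) := Fintype.piFinset (fun _ : Fin n => ({1, -1} : Finset ℝ)) with hV
  have memV : ∀ z : Fin n → ℝ, (∀ i, z i = 1 ∨ z i = -1) → z ∈ V := by
    intro z hz
    rw [hV, Fintype.mem_piFinset]
    intro i
    rcases hz i with h | h <;> simp [h]
  have memV' : ∀ z ∈ V, ∀ i, z i = 1 ∨ z i = -1 := by
    intro z hz i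
    rw [hV, Fintype.mem_piFinset] at hz
    simpa using hz i
  set A : (Fin n → ℝ) × (Fin n → ℝ) → Set Ω := fun z => {ω | X n ω = z.1 ∧ Y n ω = z.2} with hA
  have hAmeas : ∀ z, MeasurableSet (A z) := by
    intro z
    have : A z = (X n) ⁻¹' {z.1} ∩ (Y n) ⁻¹' {z.2} := by
      ext ω; simp [hA, Set.mem_preimage]
    rw [this]
    exact ((hXmeas n) (measurableSet_singleton _)).inter ((hYmeas n) (measurableSet_singleton _))
  set s : Finset ((Fin n → ℝ) × (Fin n → ℝ)) :=
    (V ×ˢ V).filter (fun z =>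
      ((∑ i, z.1 i) / (n:ℝ) - S) * ((∑ i, z.2 i) / (n:ℝ) - (1 - 2 * p) * S) < 0) with hsdef
  have hE : {ω | ((∑ i, X n ω i) / (n:ℝ) - S) * ((∑ i, Y n ω i) / (n:ℝ) - (1 - 2 * p) * S) < 0}
      = ⋃ z ∈ s, A z := by
    ext ω
    simp only [Set.mem_setOf_eq, Set.mem_iUnion]
    constructor
    · intro hω
      refine ⟨(X n ω, Y n ω), ?_, rfl, rfl⟩
      rw [hsdef, Finset.mem_filter, Finset.mem_product]
      exact ⟨⟨memV _ (hXval n ω), memV _ (hYval n ω)⟩, hω⟩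
    · rintro ⟨z, hz, hzmem⟩
      rw [hsdef, Finset.mem_filter] at hz
      have hx : X n ω = z.1 := hzmem.1
      have hy : Y n ω = z.2 := hzmem.2
      rw [hx, hy]
      exact hz.2
  have hdisj : Set.PairwiseDisjoint (↑s) A := by
    intro z _ z' _ hne
    apply Set.disjoint_left.mpr
    rintro ω ⟨h1, h2⟩ ⟨h3, h4⟩
    exact hne (Prod.ext (h1.symm.trans h3) (h2.symm.trans h4))
  have hPreal : (P {ω | ((∑ i, X n ω i) / (n:ℝ) - S) *
        ((∑ i, Y n ω i) / (n:ℝ) - (1 - 2 * p) * S) < 0}).toReal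
      = ∑ z ∈ s, (P (A z)).toReal := by
    rw [hE, measure_biUnion_finset hdisj (fun z _ => hAmeas z),
      ENNReal.toReal_sum (fun z _ => measure_ne_top P _)]
  -- integral side
  have hint : (∫ ω, Real.exp (-((1 - 2 * p) ^ 2 / 2) *
        (Real.sqrt n * ((∑ i, X n ω i) / n - S)) ^ 2) ∂P)
      = ∑ x ∈ V, (P ((X n) ⁻¹' {x})).toReal *
          Real.exp (-((1 - 2 * p) ^ 2 / 2) * (Real.sqrt n * ((∑ i, x i) / n - S)) ^ 2) := by
    have hfun : (fun ω => Real.exp (-((1 - 2 * p) ^ 2 / 2) *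
          (Real.sqrt n * ((∑ i, X n ω i) / n - S)) ^ 2))
        = fun ω => ∑ x ∈ V, Set.indicator ((X n) ⁻¹' {x})
            (fun _ => Real.exp (-((1 - 2 * p) ^ 2 / 2) *
              (Real.sqrt n * ((∑ i, x i) / n - S)) ^ 2)) ω := by
      funext ω
      rw [Finset.sum_eq_single_of_mem (X n ω) (memV _ (hXval n ω))]
      · rw [Set.indicator_of_mem (by exact rfl : ω ∈ (X n) ⁻¹' {X n ω})]
      · intro b _ hne
        apply Set.indicator_of_notMem
        intro hmem
        exact hne ((by simpa using hmem : X n ω = b)).symm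
    rw [hfun, MeasureTheory.integral_finset_sum]
    · refine Finset.sum_congr rfl fun x _ => ?_
      rw [MeasureTheory.integral_indicator_const _ ((hXmeas n) (measurableSet_singleton x)),
        smul_eq_mul]
      rfl
    · intro x _
      exact (integrable_const _).indicator ((hXmeas n) (measurableSet_singleton x))
  rw [hPreal, hint, hsdef, Finset.sum_filter, Finset.sum_product]
  apply Finset.sum_le_sum
  intro x hxV
  have hxv : ∀ i, x i = 1 ∨ x i = -1 := memV' x hxV
  have hAset : ∀ y : Fin n → ℝ, A (x, y) = {ω | X n ω = x ∧ Y n ω = y} := fun y => rfl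
  have hpre : (X n) ⁻¹' {x} = {ω | X n ω = x} := rfl
  have hrw : ∀ y ∈ V,
      (if ((∑ i, x i) / (n:ℝ) - S) * ((∑ i, y i) / (n:ℝ) - (1 - 2 * p) * S) < 0
        then (P (A (x, y))).toReal else 0)
      = (P {ω | X n ω = x}).toReal *
        (if ((∑ i, x i) / (n:ℝ) - S) * ((∑ i, y i) / (n:ℝ) - (1 - 2 * p) * S) < 0
          then ∏ i, (if y i = x i then 1 - p else p) else 0) := by
    intro y hyV
    rw [hAset, hjoint n x y hxv (memV' y hyV)]
    split_ifs <;> simp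
  calc (∑ y ∈ V, if ((∑ i, x i) / (n:ℝ) - S) * ((∑ i, y i) / (n:ℝ) - (1 - 2 * p) * S) < 0
          then (P (A (x, y))).toReal else 0)
      = (P {ω | X n ω = x}).toReal * ∑ y ∈ V,
          (if ((∑ i, x i) / (n:ℝ) - S) * ((∑ i, y i) / (n:ℝ) - (1 - 2 * p) * S) < 0
            then ∏ i, (if y i = x i then 1 - p else p) else 0) := by
        rw [Finset.mul_sum]
        exact Finset.sum_congr rfl hrw
    _ ≤ (P {ω | X n ω = x}).toReal *
          Real.exp (-((1 - 2 * p) ^ 2 / 2) * (Real.sqrt n * ((∑ i, x i) / n - S)) ^ 2) := by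
        apply mul_le_mul_of_nonneg_left _ ENNReal.toReal_nonneg
        exact key_sum p S hp0 hp1 n x hxv
    _ = (P ((X n) ⁻¹' {x})).toReal *
          Real.exp (-((1 - 2 * p) ^ 2 / 2) * (Real.sqrt n * ((∑ i, x i) / n - S)) ^ 2) := by
        rw [hpre]
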